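/- Let T be an N×N matrix over 𝕂 such that both T and 1 − T are positive semi-definite Hermitian, and such that rank T + rank (1 − T) = N. Then T is an orthogonal projection: T·T = T. (The normal-form step in the proof of Proposition 7.1(2): representatives of attracting and repelling boundary points summing to the identity are orthogonal projections.) -/

import Mathlib

open scoped ComplexOrder Matrix

/-- The normal-form step in the proof of Proposition 7.1(2): if `T` and `1 − T` are
positive semi-definite Hermitian with `rank T + rank (1 − T) = N`, then `T` is an
orthogonal projection. -/
theorem projection_normal_form {N : ℕ} (hN : 1 ≤ N) (𝕂 : Type*) [RCLike 𝕂]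
    (T : Matrix (Fin N) (Fin N) 𝕂) (hT : T.PosSemidef) (hT' : (1 - T).PosSemidef)
    (hrank : T.rank + (1 - T).rank = N) :
    T * T = T := by
  set f := T.mulVecLin with hf
  set g := (1 - T).mulVecLin with hg
  have hgx : ∀ x, g x = x - f x := by
    intro x
    simp [hf, hg, Matrix.mulVecLin_apply, Matrix.sub_mulVec, Matrix.one_mulVec]
  have hinf : LinearMap.ker f ⊓ LinearMap.ker g = ⊥ := by
    rw [Submodule.eq_bot_iff]
    rintro x ⟨hx1, hx2⟩
    have h1 : f x = 0 := hx1
    have h2 : g x = 0 := hx2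
    rw [hgx, h1, sub_zero] at h2
    exact h2
  have hNfin : Module.finrank 𝕂 (Fin N → 𝕂) = N := by
    simp [Module.finrank_fintype_fun_eq_card]
  have hker : Module.finrank 𝕂 (LinearMap.ker f) + Module.finrank 𝕂 (LinearMap.ker g) = N := by
    have h1 := LinearMap.finrank_range_add_finrank_ker f
    have h2 := LinearMap.finrank_range_add_finrank_ker g
    rw [hNfin] at h1 h2
    have hr1 : T.rank = Module.finrank 𝕂 (LinearMap.range f) := rfl
    have hr2 : (1 - T).rank = Module.finrank 𝕂 (LinearMap.range g) := rfl
    omega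
  have hsup : LinearMap.ker f ⊔ LinearMap.ker g = ⊤ := by
    apply Submodule.eq_top_of_finrank_eq
    have := Submodule.finrank_sup_add_finrank_inf_eq (LinearMap.ker f) (LinearMap.ker g)
    rw [hinf, finrank_bot] at this
    rw [hNfin]
    omega
  have key : ∀ x, T *ᵥ (T *ᵥ x) = T *ᵥ x := by
    intro x
    have hx : x ∈ LinearMap.ker f ⊔ LinearMap.ker g := hsup ▸ Submodule.mem_top
    obtain ⟨a, ha, b, hb, rfl⟩ := Submodule.mem_sup.mp hx
    have ha' : T *ᵥ a = 0 := ha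
    have hb' : T *ᵥ b = b := by
      have := hgx b
      rw [LinearMap.mem_ker.mp hb] at this
      have : f b = b := by rw [eq_comm, ← sub_eq_zero]; exact this.symm
      exact this
    simp [Matrix.mulVec_add, ha', hb']
  ext i j
  have := congrFun (key (Pi.single j 1)) i
  simpa [Matrix.mulVec_single, Matrix.mulVec_mulVec, Matrix.mulVec, dotProduct, Matrix.mul_apply, Pi.single_apply, mul_ite, Finset.sum_ite_eq, Finset.sum_ite_eq'] using this
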